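/- Let (a[m]) for m = −M,…,M be i.i.d. random variables uniform on {+c, −c} (c > 0), let p : ℝ → ℝ, and fix t₀ ∈ ℝ. Define X(t₀) = Σ_{m=−M}^{M} a[m]·p(t₀ − m δT). Suppose p(t₀) ≠ 0 and the sequence s²_N = c²·Σ_{m=−M}^{M} p(t₀ − m δT)² converges to a finite limit L > 0 as M → ∞. Then the Lindeberg condition fails for the triangular array {a[m]·p(t₀ − m δT)}: there exists ε > 0 such that lim_{N→∞} (1/s²_N)·Σ_m E[|a[m] p(t₀ − m δT)|² · 1{|a[m] p(t₀ − m δT)| > ε s_N}] = c² p(t₀)²/L > 0. -/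

import Mathlib

open MeasureTheory ProbabilityTheory Filter
open scoped ENNReal

lemma stmt6_aux_integral {Ω : Type*} [MeasurableSpace Ω] (μ : Measure Ω) [IsProbabilityMeasure μ]
    (c : ℝ) (hc : 0 < c) (X : Ω → ℝ)
    (hlaw : μ.map X = (1 / 2 : ℝ≥0∞) • Measure.dirac c + (1 / 2 : ℝ≥0∞) • Measure.dirac (-c))
    (τ r : ℝ) (hX : Measurable X) :
    ∫ ω, (if τ < |X ω * r| then (X ω * r) ^ 2 else 0) ∂μ
      = if τ < c * |r| then c ^ 2 * r ^ 2 else 0 := by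
  have hae : ∀ᵐ ω ∂μ, X ω = c ∨ X ω = -c := by
    have hs : MeasurableSet ({c, -c} : Set ℝ)ᶜ := (by measurability)
    have h0 : μ (X ⁻¹' ({c, -c} : Set ℝ)ᶜ) = 0 := by
      have := Measure.map_apply (μ := μ) hX hs
      rw [← this, hlaw]
      simp [Measure.dirac_apply' _ hs]
    have : ∀ᵐ ω ∂μ, X ω ∈ ({c, -c} : Set ℝ) := by
      rw [ae_iff]
      convert h0 using 2
      rfl
    filter_upwards [this] with ω hω
    simpa using hω
  have hval : ∀ x : ℝ, x = c ∨ x = -c →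
      (if τ < |x * r| then (x * r) ^ 2 else 0) = (if τ < c * |r| then c ^ 2 * r ^ 2 else 0) := by
    rintro x (rfl | rfl) <;>
      rw [abs_mul] <;> simp [abs_of_pos hc, abs_neg] <;> ring_nf
  calc ∫ ω, (if τ < |X ω * r| then (X ω * r) ^ 2 else 0) ∂μ
      = ∫ _ω, (if τ < c * |r| then c ^ 2 * r ^ 2 else 0) ∂μ := by
        refine integral_congr_ae ?_
        filter_upwards [hae] with ω hω using hval _ hω
    _ = if τ < c * |r| then c ^ 2 * r ^ 2 else 0 := by simp

lemma stmt6_aux_gap (δT L t₀ : ℝ) (p : ℝ → ℝ) (hp0 : p t₀ ≠ 0)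
    (hdom : ∀ m : ℤ, m ≠ 0 → |p (t₀ - m * δT)| < |p t₀|)
    (hTlim : Tendsto (fun M : ℕ => ∑ m ∈ Finset.Icc (-(M : ℤ)) (M : ℤ), p (t₀ - m * δT) ^ 2)
      atTop (nhds L)) :
    ∃ S : ℝ, 0 < S ∧ S < |p t₀| ∧ ∀ m : ℤ, m ≠ 0 → |p (t₀ - m * δT)| ≤ S := by
  set T : ℕ → ℝ := fun M => ∑ m ∈ Finset.Icc (-(M : ℤ)) (M : ℤ), p (t₀ - m * δT) ^ 2 with hT
  have hD : ∀ M : ℕ, T (M + 1) - T M =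
      p (t₀ - ((M : ℤ) + 1) * δT) ^ 2 + p (t₀ - (-((M : ℤ) + 1)) * δT) ^ 2 := by
    intro M
    have hset : Finset.Icc (-((M : ℤ) + 1)) ((M : ℤ) + 1) =
        insert ((M : ℤ) + 1) (insert (-((M : ℤ) + 1)) (Finset.Icc (-(M : ℤ)) (M : ℤ))) := by
      ext x; simp only [Finset.mem_Icc, Finset.mem_insert]; omega
    have h1 : ((M : ℤ) + 1) ∉ insert (-((M : ℤ) + 1)) (Finset.Icc (-(M : ℤ)) (M : ℤ)) := by
      simp only [Finset.mem_insert, Finset.mem_Icc]; omega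
    have h2 : (-((M : ℤ) + 1)) ∉ Finset.Icc (-(M : ℤ)) (M : ℤ) := by
      simp only [Finset.mem_Icc]; omega
    have : T (M + 1) = ∑ m ∈ Finset.Icc (-((M : ℤ) + 1)) ((M : ℤ) + 1), p (t₀ - m * δT) ^ 2 := by
      simp only [hT]; push_cast; ring_nf
      exact Finset.sum_congr rfl fun x _ => by ring
    rw [this, hset, Finset.sum_insert h1, Finset.sum_insert h2]
    push_cast
    ring
  have hDlim : Tendsto (fun M => T (M + 1) - T M) atTop (nhds 0) := by
    have h1 : Tendsto (fun M => T (M + 1)) atTop (nhds L) :=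
      hTlim.comp (tendsto_add_atTop_nat 1)
    simpa using h1.sub hTlim
  have hq : (0:ℝ) < p t₀ ^ 2 / 4 := by positivity
  obtain ⟨M₀, hM₀⟩ := (hDlim.eventually (eventually_lt_nhds hq)).exists_forall_of_atTop
  set K : ℤ := (M₀ : ℤ) + 1 with hK
  have hA1 : (1:ℤ) ∈ (Finset.Icc (-K) K).erase 0 := by
    simp only [Finset.mem_erase, Finset.mem_Icc, hK]; omega
  have hAne : ((Finset.Icc (-K) K).erase 0).Nonempty := ⟨1, hA1⟩
  set S₁ : ℝ := ((Finset.Icc (-K) K).erase 0).sup' hAne (fun m => |p (t₀ - m * δT)|) with hS₁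
  refine ⟨max S₁ (|p t₀| / 2), ?_, ?_, ?_⟩
  · have : 0 < |p t₀| / 2 := by positivity
    exact lt_max_of_lt_right this
  · apply max_lt
    · rw [hS₁, Finset.sup'_lt_iff]
      intro m hm
      exact hdom m (Finset.ne_of_mem_erase hm)
    · have : 0 < |p t₀| := abs_pos.mpr hp0
      linarith
  · intro m hm
    by_cases hmem : m ∈ (Finset.Icc (-K) K).erase 0
    · exact le_max_of_le_left (Finset.le_sup' (fun m : ℤ => |p (t₀ - m * δT)|) hmem)
    · have hmK : K < |m| := by
        simp only [Finset.mem_erase, Finset.mem_Icc] at hmem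
        rcases abs_cases m with ⟨h, _⟩ | ⟨h, _⟩ <;> omega
      set M : ℕ := m.natAbs - 1 with hM
      have hMge : M₀ ≤ M := by
        have : (m.natAbs : ℤ) = |m| := Int.abs_eq_natAbs m ▸ rfl
        omega
      have hnat : ((M : ℤ) + 1) = (m.natAbs : ℤ) := by
        have : (m.natAbs : ℤ) = |m| := Int.abs_eq_natAbs m ▸ rfl
        omega
      have hlt := hM₀ M hMge
      rw [hD M] at hlt
      push_cast at hlt
      have h1 : 0 ≤ p (t₀ - ((M : ℝ) + 1) * δT) ^ 2 := sq_nonneg _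
      have h2 : 0 ≤ p (t₀ - (-((M : ℝ) + 1)) * δT) ^ 2 := sq_nonneg _
      have hfm : p (t₀ - m * δT) ^ 2 < p t₀ ^ 2 / 4 := by
        rcases Int.natAbs_eq m with he | he
        · have : m = (M : ℤ) + 1 := by rw [he, ← hnat]
          rw [this]; push_cast; linarith
        · have : m = -((M : ℤ) + 1) := by rw [he, ← hnat]
          rw [this]; push_cast; linarith
      have habs : |p (t₀ - m * δT)| ≤ |p t₀| / 2 := by
        nlinarith [sq_abs (p (t₀ - m * δT)), sq_abs (p t₀), abs_nonneg (p (t₀ - m * δT)), abs_nonneg (p t₀)]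
      exact le_max_of_le_right habs

/-- Failure of the Lindeberg condition for FTN signaling with QPSK symbols:
with i.i.d. symbols a[m] uniform on {±c}, coefficients p(t₀ − m δT), dominant
coefficient p(t₀) ≠ 0, and variances s²_N → L > 0, there is ε > 0 for which the
Lindeberg sum converges to c² p(t₀)²/L > 0. -/
theorem stmt_6 {Ω : Type*} [MeasurableSpace Ω] (μ : Measure Ω) [IsProbabilityMeasure μ]
    (c δT L t₀ : ℝ) (hc : 0 < c) (hδT : 0 < δT) (hL : 0 < L)
    (p : ℝ → ℝ) (hp0 : p t₀ ≠ 0)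
    (hdom : ∀ m : ℤ, m ≠ 0 → |p (t₀ - m * δT)| < |p t₀|)
    (a : ℤ → Ω → ℝ) (hmeas : ∀ m, Measurable (a m))
    (hiid : iIndepFun a μ)
    (hlaw : ∀ m : ℤ, μ.map (a m) =
      (1 / 2 : ℝ≥0∞) • Measure.dirac c + (1 / 2 : ℝ≥0∞) • Measure.dirac (-c))
    (s2 : ℕ → ℝ)
    (hs2 : ∀ M : ℕ, s2 M = c ^ 2 * ∑ m ∈ Finset.Icc (-(M : ℤ)) (M : ℤ), p (t₀ - m * δT) ^ 2)
    (hs2lim : Tendsto s2 atTop (nhds L)) :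
    ∃ ε > (0 : ℝ),
      Tendsto (fun M : ℕ =>
          (1 / s2 M) * ∑ m ∈ Finset.Icc (-(M : ℤ)) (M : ℤ),
            ∫ ω, (if ε * Real.sqrt (s2 M) < |a m ω * p (t₀ - m * δT)|
                  then (a m ω * p (t₀ - m * δT)) ^ 2 else 0) ∂μ)
        atTop (nhds (c ^ 2 * p t₀ ^ 2 / L)) ∧
      0 < c ^ 2 * p t₀ ^ 2 / L := by
  have hc2 : (0:ℝ) < c ^ 2 := by positivity
  have hTeq : ∀ M : ℕ, ∑ m ∈ Finset.Icc (-(M : ℤ)) (M : ℤ), p (t₀ - m * δT) ^ 2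
      = s2 M / c ^ 2 := by
    intro M; rw [hs2 M]; field_simp
    exact Finset.sum_congr rfl fun x _ => by ring
  have hTlim : Tendsto (fun M : ℕ => ∑ m ∈ Finset.Icc (-(M : ℤ)) (M : ℤ), p (t₀ - m * δT) ^ 2)
      atTop (nhds (L / c ^ 2)) :=
    (hs2lim.div_const (c ^ 2)).congr fun M => (hTeq M).symm
  obtain ⟨S, hS0, hSlt, hSb⟩ := stmt6_aux_gap δT (L / c ^ 2) t₀ p hp0 hdom hTlim
  have hpt : 0 < |p t₀| := abs_pos.mpr hp0
  have hsL : 0 < Real.sqrt L := Real.sqrt_pos.mpr hL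
  set ε : ℝ := c * (S + |p t₀|) / (2 * Real.sqrt L) with hε_def
  have hε : 0 < ε := by positivity
  have hεL : ε * Real.sqrt L = c * (S + |p t₀|) / 2 := by
    rw [hε_def]; field_simp
  have hlow : c * S < ε * Real.sqrt L := by rw [hεL]; nlinarith
  have hhigh : ε * Real.sqrt L < c * |p t₀| := by rw [hεL]; nlinarith
  have hsqrt : Tendsto (fun M => ε * Real.sqrt (s2 M)) atTop (nhds (ε * Real.sqrt L)) :=
    ((Real.continuous_sqrt.tendsto L).comp hs2lim).const_mul ε
  have hev1 : ∀ᶠ M in atTop, c * S < ε * Real.sqrt (s2 M) :=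
    hsqrt.eventually (eventually_gt_nhds hlow)
  have hev2 : ∀ᶠ M in atTop, ε * Real.sqrt (s2 M) < c * |p t₀| :=
    hsqrt.eventually (eventually_lt_nhds hhigh)
  refine ⟨ε, hε, ?_, by positivity⟩
  have hcongr : (fun M : ℕ => (1 / s2 M) * (c ^ 2 * p t₀ ^ 2)) =ᶠ[atTop]
      (fun M : ℕ => (1 / s2 M) * ∑ m ∈ Finset.Icc (-(M : ℤ)) (M : ℤ),
        ∫ ω, (if ε * Real.sqrt (s2 M) < |a m ω * p (t₀ - m * δT)|
              then (a m ω * p (t₀ - m * δT)) ^ 2 else 0) ∂μ) := by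
    filter_upwards [hev1, hev2] with M h1 h2
    have hsum : ∑ m ∈ Finset.Icc (-(M : ℤ)) (M : ℤ),
        ∫ ω, (if ε * Real.sqrt (s2 M) < |a m ω * p (t₀ - m * δT)|
              then (a m ω * p (t₀ - m * δT)) ^ 2 else 0) ∂μ = c ^ 2 * p t₀ ^ 2 := by
      rw [Finset.sum_congr rfl (fun m _ =>
        stmt6_aux_integral μ c hc (a m) (hlaw m) (ε * Real.sqrt (s2 M)) (p (t₀ - m * δT)) (hmeas m))]
      rw [Finset.sum_eq_single_of_mem 0 (by simp only [Finset.mem_Icc]; omega) ?_]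
      · simp only [Int.cast_zero, zero_mul, sub_zero]
        exact if_pos h2
      · intro m _ hm
        refine if_neg ?_
        push_neg
        calc c * |p (t₀ - m * δT)| ≤ c * S :=
              mul_le_mul_of_nonneg_left (hSb m hm) hc.le
          _ ≤ ε * Real.sqrt (s2 M) := h1.le
    rw [hsum]
  have hlim : Tendsto (fun M : ℕ => (1 / s2 M) * (c ^ 2 * p t₀ ^ 2)) atTop
      (nhds (1 / L * (c ^ 2 * p t₀ ^ 2))) := by
    have hinv : Tendsto (fun M => (s2 M)⁻¹) atTop (nhds L⁻¹) := hs2lim.inv₀ hL.ne'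
    simpa [one_div] using hinv.mul_const (c ^ 2 * p t₀ ^ 2)
  have heq : c ^ 2 * p t₀ ^ 2 / L = 1 / L * (c ^ 2 * p t₀ ^ 2) := by ring
  rw [heq]
  exact Tendsto.congr' hcongr hlim
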